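/- For every x ≥ 0, (1/2)·√(1 − exp(−x²/2)) ≤ (1/√(2π)) · ∫_0^x exp(−t²/2) dt ≤ (1/2)·√(1 − exp(−2x²/π)). -/

import Mathlib

open MeasureTheory Real Set Filter

noncomputable def chuI (x : ℝ) : ℝ := ∫ t in (0:ℝ)..x, Real.exp (-t ^ 2 / 2)

/-- once negative on `[0,∞)`, stays nonpositive -/
def OnceNeg (g : ℝ → ℝ) : Prop := ∀ a b : ℝ, 0 ≤ a → a ≤ b → g a < 0 → g b ≤ 0

lemma onceNeg_step {g g' : ℝ → ℝ} (hd : ∀ x, HasDerivAt g (g' x) x)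
    (h0 : 0 ≤ g 0) (hP : OnceNeg g') : OnceNeg g := by
  intro a b ha hab hga
  have ha0 : 0 < a := by
    rcases ha.lt_or_eq with h | h
    · exact h
    · exfalso; rw [← h] at hga; linarith
  obtain ⟨c, hc, hceq⟩ := exists_hasDerivAt_eq_slope g g' ha0
    (fun x _ => (hd x).continuousAt.continuousWithinAt) (fun x _ => hd x)
  have hgc : g' c < 0 := by
    rw [hceq]
    apply div_neg_of_neg_of_pos <;> linarith
  rcases hab.lt_or_eq with h | h
  · have hmono : AntitoneOn g (Icc a b) := by
      apply antitoneOn_of_deriv_nonpos (convex_Icc a b)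
        (fun x _ => (hd x).continuousAt.continuousWithinAt)
        (fun x hx => (hd x).differentiableAt.differentiableWithinAt)
      intro x hxmem
      rw [interior_Icc] at hxmem
      rw [(hd x).deriv]
      exact hP c x hc.1.le (by linarith [hc.2, hxmem.1]) hgc
    have := hmono (left_mem_Icc.mpr h.le) (right_mem_Icc.mpr h.le) h.le
    linarith
  · rw [← h]; exact hga.le

lemma nonneg_of_onceNeg {g g' : ℝ → ℝ} (hd : ∀ x, HasDerivAt g (g' x) x)
    (h0 : g 0 = 0) (hP : OnceNeg g') (hlim : Tendsto g atTop (nhds 0)) :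
    ∀ x, 0 ≤ x → 0 ≤ g x := by
  intro x hx
  by_cases h : ∀ t ∈ Icc (0:ℝ) x, 0 ≤ g' t
  · have hmono : MonotoneOn g (Icc 0 x) := by
      apply monotoneOn_of_deriv_nonneg (convex_Icc 0 x)
        (fun t _ => (hd t).continuousAt.continuousWithinAt)
        (fun t _ => (hd t).differentiableAt.differentiableWithinAt)
      intro t htmem
      rw [interior_Icc] at htmem
      rw [(hd t).deriv]
      exact h t ⟨htmem.1.le, htmem.2.le⟩
    have := hmono (left_mem_Icc.mpr hx) (right_mem_Icc.mpr hx) hx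
    linarith
  · push_neg at h
    obtain ⟨a, ha, hga⟩ := h
    have key : ∀ y, x ≤ y → g y ≤ g x := by
      intro y hy
      rcases hy.lt_or_eq with h' | h'
      · have hmono : AntitoneOn g (Icc x y) := by
          apply antitoneOn_of_deriv_nonpos (convex_Icc x y)
            (fun t _ => (hd t).continuousAt.continuousWithinAt)
            (fun t _ => (hd t).differentiableAt.differentiableWithinAt)
          intro t htmem
          rw [interior_Icc] at htmem
          rw [(hd t).deriv]
          exact hP a t ha.1 (by linarith [ha.2, htmem.1]) hga
        exact hmono (left_mem_Icc.mpr h'.le) (right_mem_Icc.mpr h'.le) h'.le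
      · rw [← h']
    exact le_of_tendsto hlim (eventually_atTop.2 ⟨x, key⟩)

lemma cont_g : Continuous fun t : ℝ => Real.exp (-t ^ 2 / 2) := by
  fun_prop

lemma chuI_hasDeriv (x : ℝ) : HasDerivAt chuI (Real.exp (-x ^ 2 / 2)) x :=
  intervalIntegral.integral_hasDerivAt_right (cont_g.intervalIntegrable _ _)
    cont_g.stronglyMeasurable.stronglyMeasurableAtFilter cont_g.continuousAt

lemma chuI_zero : chuI 0 = 0 := intervalIntegral.integral_same

lemma chuI_tendsto : Tendsto chuI atTop (nhds (Real.sqrt (2 * π) / 2)) := by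
  have hfun : (fun t : ℝ => Real.exp (-t ^ 2 / 2)) = fun t : ℝ => Real.exp (-(1/2) * t ^ 2) := by
    funext t; congr 1; ring
  have hint : IntegrableOn (fun t : ℝ => Real.exp (-t ^ 2 / 2)) (Ioi 0) := by
    rw [hfun]
    exact (integrable_exp_neg_mul_sq (by norm_num : (0:ℝ) < 1/2)).integrableOn
  have h := intervalIntegral_tendsto_integral_Ioi 0 hint tendsto_id
  have hval : (∫ t in Ioi (0:ℝ), Real.exp (-t ^ 2 / 2)) = Real.sqrt (2 * π) / 2 := by
    rw [hfun, integral_gaussian_Ioi]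
    norm_num
    ring
  rw [hval] at h
  exact h

lemma exp_negsq_hasDeriv (x : ℝ) :
    HasDerivAt (fun x : ℝ => Real.exp (-x ^ 2 / 2)) (-x * Real.exp (-x ^ 2 / 2)) x := by
  have h1 : HasDerivAt (fun x : ℝ => -x ^ 2 / 2) (-x) x := by
    have := ((hasDerivAt_pow 2 x).neg).div_const 2
    refine this.congr_deriv ?_
    simp only [id_eq, Nat.cast_ofNat, pow_one]; ring
  have := h1.exp
  convert this using 1
  ring

lemma exp_negsq_tendsto : Tendsto (fun x : ℝ => Real.exp (-x ^ 2 / 2)) atTop (nhds 0) := by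
  apply Real.tendsto_exp_atBot.comp
  have h : Tendsto (fun x : ℝ => x ^ 2) atTop atTop := tendsto_pow_atTop two_ne_zero
  have := (tendsto_neg_atTop_atBot.comp h).atBot_div_const (by norm_num : (0:ℝ) < 2)
  convert this using 1
  rfl

noncomputable def cF (x : ℝ) : ℝ := chuI x ^ 2 - (π/2) * (1 - Real.exp (-x ^ 2 / 2))
noncomputable def cg1 (x : ℝ) : ℝ := 2 * chuI x - (π/2) * x

lemma cg1_hasDeriv (x : ℝ) :
    HasDerivAt cg1 (2 * Real.exp (-x ^ 2 / 2) - π/2) x := by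
  have := ((chuI_hasDeriv x).const_mul 2).sub ((hasDerivAt_id x).const_mul (π/2))
  refine this.congr_deriv ?_
  ring

lemma cg1_onceNeg : OnceNeg cg1 := by
  apply onceNeg_step cg1_hasDeriv
  · simp [cg1, chuI_zero]
  · intro a b ha hab h
    have hsq : a ^ 2 ≤ b ^ 2 := by nlinarith
    have : Real.exp (-b ^ 2 / 2) ≤ Real.exp (-a ^ 2 / 2) := Real.exp_le_exp.2 (by linarith)
    linarith

lemma cF_hasDeriv (x : ℝ) :
    HasDerivAt cF (Real.exp (-x ^ 2 / 2) * cg1 x) x := by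
  have h2 : HasDerivAt (fun x => chuI x ^ 2) (2 * chuI x * Real.exp (-x ^ 2 / 2)) x := by
    have := (chuI_hasDeriv x).pow 2
    refine this.congr_deriv ?_
    simp only [id_eq, Nat.cast_ofNat, pow_one]; ring
  have h3 := ((hasDerivAt_const x (1:ℝ)).sub (exp_negsq_hasDeriv x)).const_mul (π/2)
  have := h2.sub h3
  refine this.congr_deriv ?_
  simp [cg1]; ring

lemma cF_onceNeg_deriv : OnceNeg (fun x => Real.exp (-x ^ 2 / 2) * cg1 x) := by
  intro a b ha hab h
  have hea := Real.exp_pos (-a ^ 2 / 2)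
  have hga : cg1 a < 0 := by nlinarith
  exact mul_nonpos_of_nonneg_of_nonpos (Real.exp_pos _).le (cg1_onceNeg a b ha hab hga)

lemma cF_tendsto : Tendsto cF atTop (nhds 0) := by
  have h := ((chuI_tendsto.pow 2)).sub
    (((tendsto_const_nhds (x := (1:ℝ))).sub exp_negsq_tendsto).const_mul (π/2))
  have hval : (Real.sqrt (2*π) / 2) ^ 2 - (π/2) * (1 - 0) = 0 := by
    rw [div_pow, Real.sq_sqrt (by positivity)]
    ring
  rw [hval] at h
  exact h

lemma cF_nonneg : ∀ x, 0 ≤ x → 0 ≤ cF x := by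
  apply nonneg_of_onceNeg cF_hasDeriv _ cF_onceNeg_deriv cF_tendsto
  simp [cF, chuI_zero]

-- Upper bound machinery
noncomputable def cc : ℝ := 1/2 - 2/π

lemma cc_half_pos : 0 < 1/2 + cc := by
  have h2 : (2:ℝ) < π := by linarith [Real.pi_gt_three]
  have : 2/π < 1 := (div_lt_one Real.pi_pos).2 h2
  simp only [cc]; linarith

/-- `-η` where `η u = exp(-(1/2+cc)u) - (1+2cc·u)`. -/
noncomputable def cmeta (u : ℝ) : ℝ := 1 + 2*cc*u - Real.exp (-u/2 - cc*u)

lemma meta_hasDeriv (u : ℝ) :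
    HasDerivAt cmeta (2*cc + (1/2 + cc) * Real.exp (-u/2 - cc*u)) u := by
  have h1 : HasDerivAt (fun u : ℝ => -u/2 - cc*u) (-(1:ℝ)/2 - cc) u := by
    have := (((hasDerivAt_id u).neg).div_const 2).sub ((hasDerivAt_id u).const_mul cc)
    refine this.congr_deriv ?_
    ring
  have := ((hasDerivAt_const u (1:ℝ)).add ((hasDerivAt_id u).const_mul (2*cc))).sub h1.exp
  refine this.congr_deriv ?_
  ring

lemma meta_onceNeg : OnceNeg cmeta := by
  apply onceNeg_step meta_hasDeriv
  · simp [cmeta]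
  · intro a b ha hab h
    have hk := cc_half_pos
    have hexp : Real.exp (-b/2 - cc*b) ≤ Real.exp (-a/2 - cc*a) := by
      apply Real.exp_le_exp.2
      nlinarith
    nlinarith [Real.exp_pos (-b/2 - cc*b)]

noncomputable def cphi (x : ℝ) : ℝ := x * Real.exp (cc * x ^ 2) - chuI x

lemma cphi_hasDeriv (x : ℝ) :
    HasDerivAt cphi (Real.exp (cc * x ^ 2) * (1 + 2*cc*x ^ 2) - Real.exp (-x ^ 2 / 2)) x := by
  have h1 : HasDerivAt (fun x : ℝ => cc * x ^ 2) (cc * (2*x)) x := by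
    have := (hasDerivAt_pow 2 x).const_mul cc
    refine this.congr_deriv ?_
    simp only [id_eq, Nat.cast_ofNat, pow_one]; ring
  have h2 := (hasDerivAt_id x).mul h1.exp
  have := h2.sub (chuI_hasDeriv x)
  refine this.congr_deriv ?_
  simp only [id_eq]; ring

lemma cphi_onceNeg_deriv :
    OnceNeg (fun x => Real.exp (cc * x ^ 2) * (1 + 2*cc*x ^ 2) - Real.exp (-x ^ 2 / 2)) := by
  intro a b ha hab h
  have hsq : a ^ 2 ≤ b ^ 2 := by nlinarith
  -- translate to meta
  have hma : cmeta (a ^ 2) < 0 := by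
    simp only [cmeta]
    have hkey : (1 + 2*cc*a ^ 2) * Real.exp (cc * a ^ 2) < Real.exp (-a ^ 2 / 2) := by
      nlinarith [Real.exp_pos (cc * a ^ 2)]
    have := (lt_div_iff₀ (Real.exp_pos (cc * a ^ 2))).2 hkey
    rw [← Real.exp_sub] at this
    have heq : -a ^ 2 / 2 - cc * a ^ 2 = -(a ^ 2)/2 - cc * a ^ 2 := by ring
    rw [heq] at this
    linarith
  have hmb := meta_onceNeg (a ^ 2) (b ^ 2) (sq_nonneg a) hsq hma
  -- translate back
  simp only [cmeta] at hmb
  have h1 : 1 + 2*cc*b ^ 2 ≤ Real.exp (-(b ^ 2)/2 - cc * b ^ 2) := by linarith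
  have h2 : (1 + 2*cc*b ^ 2) * Real.exp (cc * b ^ 2) ≤
      Real.exp (-(b ^ 2)/2 - cc * b ^ 2) * Real.exp (cc * b ^ 2) := by
    nlinarith [Real.exp_pos (cc * b ^ 2)]
  rw [← Real.exp_add] at h2
  have heq : -(b ^ 2)/2 - cc * b ^ 2 + cc * b ^ 2 = -b ^ 2 / 2 := by ring
  rw [heq] at h2
  linarith [h2]

lemma cphi_onceNeg : OnceNeg cphi := by
  apply onceNeg_step cphi_hasDeriv _ cphi_onceNeg_deriv
  simp [cphi, chuI_zero]

noncomputable def cG (x : ℝ) : ℝ := (π/2) * (1 - Real.exp (-2 * x ^ 2 / π)) - chuI x ^ 2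

lemma exp_cc_eq (x : ℝ) : Real.exp (-x ^ 2 / 2) * Real.exp (cc * x ^ 2) =
    Real.exp (-2 * x ^ 2 / π) := by
  rw [← Real.exp_add]
  congr 1
  simp only [cc]
  field_simp
  ring

lemma cG_hasDeriv (x : ℝ) :
    HasDerivAt cG (2 * Real.exp (-x ^ 2 / 2) * cphi x) x := by
  have h1 : HasDerivAt (fun x : ℝ => -2 * x ^ 2 / π) (-2 * (2*x) / π) x := by
    have := ((hasDerivAt_pow 2 x).const_mul (-2)).div_const π
    refine this.congr_deriv ?_
    simp only [id_eq, Nat.cast_ofNat, pow_one]; ring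
  have h2 := ((hasDerivAt_const x (1:ℝ)).sub h1.exp).const_mul (π/2)
  have h3 : HasDerivAt (fun x => chuI x ^ 2) (2 * chuI x * Real.exp (-x ^ 2 / 2)) x := by
    have := (chuI_hasDeriv x).pow 2
    refine this.congr_deriv ?_
    simp only [id_eq, Nat.cast_ofNat, pow_one]; ring
  have := h2.sub h3
  refine this.congr_deriv (Eq.symm ?_)
  simp only [cphi]
  rw [mul_sub, show (2:ℝ) * Real.exp (-x ^ 2 / 2) * (x * Real.exp (cc * x ^ 2)) =
    2 * x * (Real.exp (-x ^ 2 / 2) * Real.exp (cc * x ^ 2)) by ring, exp_cc_eq]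
  have hπ := Real.pi_ne_zero
  field_simp
  ring

lemma cG_onceNeg_deriv : OnceNeg (fun x => 2 * Real.exp (-x ^ 2 / 2) * cphi x) := by
  intro a b ha hab h
  have hea := Real.exp_pos (-a ^ 2 / 2)
  have hga : cphi a < 0 := by nlinarith
  have := cphi_onceNeg a b ha hab hga
  have heb := Real.exp_pos (-b ^ 2 / 2)
  nlinarith

lemma exp_negsq_pi_tendsto : Tendsto (fun x : ℝ => Real.exp (-2 * x ^ 2 / π)) atTop (nhds 0) := by
  apply Real.tendsto_exp_atBot.comp
  have h : Tendsto (fun x : ℝ => x ^ 2) atTop atTop := tendsto_pow_atTop two_ne_zero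
  have h2 : Tendsto (fun x : ℝ => -2 * x ^ 2) atTop atBot := by
    have := tendsto_neg_atTop_atBot.comp (h.const_mul_atTop (by norm_num : (0:ℝ) < 2))
    convert this using 2 with x
    simp [Function.comp]
  exact h2.atBot_div_const Real.pi_pos

lemma cG_tendsto : Tendsto cG atTop (nhds 0) := by
  have h := (((tendsto_const_nhds (x := (1:ℝ))).sub exp_negsq_pi_tendsto).const_mul (π/2)).sub
    (chuI_tendsto.pow 2)
  have hval : (π/2) * (1 - 0) - (Real.sqrt (2*π) / 2) ^ 2 = 0 := by
    rw [div_pow, Real.sq_sqrt (by positivity)]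
    ring
  rw [hval] at h
  exact h

lemma cG_nonneg : ∀ x, 0 ≤ x → 0 ≤ cG x := by
  apply nonneg_of_onceNeg cG_hasDeriv _ cG_onceNeg_deriv cG_tendsto
  simp [cG, chuI_zero]

lemma sqrt_four : Real.sqrt 4 = 2 := by
  rw [show (4:ℝ) = 2 ^ 2 by norm_num, Real.sqrt_sq (by norm_num)]

/-- Chu's (1955) bounds: for every `x ≥ 0`,
`(1/2)√(1 − e^{−x²/2}) ≤ (1/√(2π)) ∫_0^x e^{−t²/2} dt ≤ (1/2)√(1 − e^{−2x²/π})`. -/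
theorem chu_bounds (x : ℝ) (hx : 0 ≤ x) :
    (1 / 2) * Real.sqrt (1 - Real.exp (-x ^ 2 / 2)) ≤
      (Real.sqrt (2 * Real.pi))⁻¹ * (∫ t in (0 : ℝ)..x, Real.exp (-t ^ 2 / 2)) ∧
    (Real.sqrt (2 * Real.pi))⁻¹ * (∫ t in (0 : ℝ)..x, Real.exp (-t ^ 2 / 2)) ≤
      (1 / 2) * Real.sqrt (1 - Real.exp (-2 * x ^ 2 / Real.pi)) := by
  have hI0 : 0 ≤ chuI x :=
    intervalIntegral.integral_nonneg hx (fun u _ => (Real.exp_pos _).le)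
  have h2π : (0:ℝ) < 2 * π := by positivity
  have hsq : (0:ℝ) < Real.sqrt (2 * π) := Real.sqrt_pos.2 h2π
  have he1 : Real.exp (-x ^ 2 / 2) ≤ 1 := by
    rw [Real.exp_le_one_iff]
    nlinarith [sq_nonneg x]
  have he2 : Real.exp (-2 * x ^ 2 / π) ≤ 1 := by
    rw [Real.exp_le_one_iff]
    have := Real.pi_pos
    have : -2 * x ^ 2 / π ≤ 0 := div_nonpos_of_nonpos_of_nonneg (by nlinarith [sq_nonneg x]) Real.pi_pos.le
    linarith
  have hrhs : (Real.sqrt (2 * π))⁻¹ * chuI x = Real.sqrt (chuI x ^ 2 / (2 * π)) := by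
    rw [Real.sqrt_div (sq_nonneg _), Real.sqrt_sq hI0]
    field_simp
  constructor
  · show (1 / 2) * Real.sqrt (1 - Real.exp (-x ^ 2 / 2)) ≤ (Real.sqrt (2 * π))⁻¹ * chuI x
    rw [hrhs, show (1:ℝ)/2 * Real.sqrt (1 - Real.exp (-x ^ 2 / 2)) =
        Real.sqrt ((1 - Real.exp (-x ^ 2 / 2)) / 4) by
      rw [Real.sqrt_div (by linarith) 4, sqrt_four]; ring]
    apply Real.sqrt_le_sqrt
    rw [div_le_div_iff₀ (by norm_num) h2π]
    have hF := cF_nonneg x hx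
    simp only [cF] at hF
    nlinarith [Real.pi_pos]
  · show (Real.sqrt (2 * π))⁻¹ * chuI x ≤ (1 / 2) * Real.sqrt (1 - Real.exp (-2 * x ^ 2 / π))
    rw [hrhs, show (1:ℝ)/2 * Real.sqrt (1 - Real.exp (-2 * x ^ 2 / π)) =
        Real.sqrt ((1 - Real.exp (-2 * x ^ 2 / π)) / 4) by
      rw [Real.sqrt_div (by linarith) 4, sqrt_four]; ring]
    apply Real.sqrt_le_sqrt
    rw [div_le_div_iff₀ h2π (by norm_num)]
    have hG := cG_nonneg x hx
    simp only [cG] at hG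
    nlinarith [Real.pi_pos]
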